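/- Let E be a closed discrete subset of ℂ² contained in the complex line ℂ × {0}. Then there exists an injective holomorphic map F : ℂ² → ℂ² whose image is disjoint from E. (Consequently, the complement of any tame closed discrete set in ℂ² admits an injective holomorphic map from ℂ², and in particular is dominable by ℂ².) -/

import Mathlib

open Complex

open Filter Metric Topology

noncomputable section

namespace Stmt15



/-- The expanding map `Ψ`, inverse of a holomorphic automorphism of `ℂ²` that
preserves the line `w = 0` and has an attracting fixed point at `(0,1)`. -/
def psi (p : ℂ × ℂ) : ℂ × ℂ :=
  (4 * p.1 - 4 * p.2 + 2 + 2 * p.2 * exp (p.2 - p.1 - 1),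
   p.2 * exp (p.1 - p.2 + p.2 * exp (p.2 - p.1 - 1)))

def pp : ℂ × ℂ := (0, 1)

theorem psi_diff : Differentiable ℂ psi := by
  unfold psi
  apply Differentiable.prodMk <;> fun_prop

theorem psi_fix : psi pp = pp := by
  simp [psi, pp]; norm_num

theorem psi_snd (p : ℂ × ℂ) :
    (psi p).2 = p.2 * exp (p.1 - p.2 + p.2 * exp (p.2 - p.1 - 1)) := rfl

theorem psi_snd_eq_zero {p : ℂ × ℂ} (h : (psi p).2 = 0) : p.2 = 0 := by
  rw [psi_snd] at h
  rcases mul_eq_zero.1 h with h' | h'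
  · exact h'
  · exact absurd h' (exp_ne_zero _)

theorem psi_inj : Function.Injective psi := by
  rintro ⟨u, v⟩ ⟨u', v'⟩ h
  have h1 : 4 * u - 4 * v + 2 + 2 * v * exp (v - u - 1)
      = 4 * u' - 4 * v' + 2 + 2 * v' * exp (v' - u' - 1) := congrArg Prod.fst h
  have h2 : v * exp (u - v + v * exp (v - u - 1))
      = v' * exp (u' - v' + v' * exp (v' - u' - 1)) := congrArg Prod.snd h
  have key : v * exp (v - u - 1) = v' * exp (v' - u' - 1) := by
    have e2 : v * exp (v - u - 1) * exp (2*u - 2*v + 1 + v * exp (v - u - 1))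
        = v' * exp (v' - u' - 1) * exp (2*u' - 2*v' + 1 + v' * exp (v' - u' - 1)) := by
      rw [mul_assoc, mul_assoc, ← Complex.exp_add, ← Complex.exp_add]
      convert h2 using 2 <;> ring_nf
    have e3 : 2*u - 2*v + 1 + v * exp (v - u - 1)
        = 2*u' - 2*v' + 1 + v' * exp (v' - u' - 1) := by linear_combination h1 / 2
    rw [e3] at e2
    exact mul_right_cancel₀ (exp_ne_zero _) e2
  have huv : v - u - 1 = v' - u' - 1 := by linear_combination (2*key - h1) / 4
  have hv : v = v' := by
    have := key
    rw [huv] at this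
    exact mul_right_cancel₀ (exp_ne_zero _) this
  have hu : u = u' := by linear_combination hv - huv
  simp [hu, hv]

theorem psi_taylor {η : ℂ × ℂ} (hη : ‖η‖ ≤ 1/4) :
    ‖psi (pp + η) - pp - (2:ℂ) • η‖ ≤ 32 * ‖η‖^2 := by
  obtain ⟨s, t⟩ := η
  set r : ℝ := ‖((s, t) : ℂ × ℂ)‖ with hr
  have hr0 : 0 ≤ r := norm_nonneg _
  have hs : ‖s‖ ≤ r := norm_fst_le ((s, t) : ℂ × ℂ)
  have ht : ‖t‖ ≤ r := norm_snd_le ((s, t) : ℂ × ℂ)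
  have hr4 : r ≤ 1/4 := hη
  set δ : ℂ := t - s with hδdef
  set ρ : ℂ := exp δ - 1 - δ with hρdef
  set σ : ℂ := t * δ + (1 + t) * ρ with hσdef
  set ρ₂ : ℂ := exp (t + σ) - 1 - (t + σ) with hρ₂def
  have hδn : ‖δ‖ ≤ 2 * r := by
    calc ‖t - s‖ ≤ ‖t‖ + ‖s‖ := norm_sub_le _ _
      _ ≤ 2 * r := by linarith
  have hρn : ‖ρ‖ ≤ 4 * r^2 := by
    have h1 : ‖δ‖ ≤ 1 := by linarith
    have h2 := Complex.norm_exp_sub_one_sub_id_le h1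
    calc ‖ρ‖ ≤ ‖δ‖^2 := h2
      _ ≤ (2*r)^2 := by exact pow_le_pow_left₀ (norm_nonneg _) hδn 2
      _ = 4 * r^2 := by ring
  have h1t : ‖(1:ℂ) + t‖ ≤ 1 + r := by
    calc ‖(1:ℂ) + t‖ ≤ ‖(1:ℂ)‖ + ‖t‖ := norm_add_le _ _
      _ ≤ 1 + r := by rw [norm_one]; linarith
  have hσn : ‖σ‖ ≤ 7 * r^2 := by
    have : ‖σ‖ ≤ ‖t‖ * ‖δ‖ + ‖(1:ℂ)+t‖ * ‖ρ‖ := by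
      calc ‖σ‖ ≤ ‖t * δ‖ + ‖(1+t) * ρ‖ := norm_add_le _ _
        _ = ‖t‖ * ‖δ‖ + ‖(1:ℂ)+t‖ * ‖ρ‖ := by rw [norm_mul, norm_mul]
    have ht2 : ‖t‖ * ‖δ‖ ≤ r * (2*r) :=
      mul_le_mul ht hδn (norm_nonneg _) hr0
    have ht3 : ‖(1:ℂ)+t‖ * ‖ρ‖ ≤ (1+r) * (4*r^2) :=
      mul_le_mul h1t hρn (norm_nonneg _) (by linarith)
    nlinarith
  have htσ : ‖t + σ‖ ≤ r + 7 * r^2 := by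
    calc ‖t + σ‖ ≤ ‖t‖ + ‖σ‖ := norm_add_le _ _
      _ ≤ r + 7 * r^2 := by linarith
  have htσ1 : ‖t + σ‖ ≤ 1 := by nlinarith
  have hρ₂n : ‖ρ₂‖ ≤ 8 * r^2 := by
    have h1 : ‖t + σ‖ ≤ 1 := htσ1
    have h2 := Complex.norm_exp_sub_one_sub_id_le h1
    calc ‖ρ₂‖ ≤ ‖t + σ‖^2 := h2
      _ ≤ (r + 7*r^2)^2 := pow_le_pow_left₀ (norm_nonneg _) htσ 2
      _ ≤ 8 * r^2 := by nlinarith [hr0, hr4, sq_nonneg r, mul_nonneg hr0 hr0, mul_nonneg (mul_nonneg hr0 hr0) hr0, mul_nonneg (mul_nonneg (mul_nonneg hr0 hr0) hr0) hr0]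
  -- the vector identity
  have hpair : psi (pp + ((s, t) : ℂ × ℂ)) - pp - (2:ℂ) • ((s, t) : ℂ × ℂ)
      = (2*t*δ + 2*(1+t)*ρ, t*t + σ + ρ₂ + t*σ + t*ρ₂) := by
    have hexp1 : (1 + t) - s - 1 = δ := by rw [hδdef]; ring
    have hexpδ : exp δ = 1 + δ + ρ := by rw [hρdef]; ring
    have hexpG : s - (1 + t) + (1 + t) * exp δ = t + σ := by
      rw [hexpδ, hσdef, hρdef, hδdef]; ring
    have hexp2 : exp (t + σ) = 1 + (t + σ) + ρ₂ := by rw [hρ₂def]; ring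
    show psi (0 + s, 1 + t) - (0, 1) - ((2:ℂ) • s, (2:ℂ) • t) = _
    rw [zero_add]
    show (4*s - 4*(1+t) + 2 + 2*(1+t)*exp ((1+t) - s - 1)
        - 0 - (2:ℂ) • s,
        (1+t) * exp (s - (1+t) + (1+t) * exp ((1+t) - s - 1)) - 1 - (2:ℂ) • t) = _
    rw [hexp1, hexpG, hexp2, hexpδ]
    simp only [smul_eq_mul]
    rw [Prod.mk.injEq]
    refine ⟨by rw [hδdef]; ring, by ring⟩
  rw [hpair]
  show max ‖2*t*δ + 2*(1+t)*ρ‖ ‖t*t + σ + ρ₂ + t*σ + t*ρ₂‖ ≤ 32 * r^2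
  apply max_le
  · have b1 : ‖2*t*δ‖ ≤ 2 * (r * (2*r)) := by
      rw [norm_mul, norm_mul, Complex.norm_ofNat]
      have := mul_le_mul ht hδn (norm_nonneg _) hr0
      nlinarith [norm_nonneg δ, norm_nonneg t]
    have b2 : ‖2*(1+t)*ρ‖ ≤ 2 * ((1+r) * (4*r^2)) := by
      rw [norm_mul, norm_mul, Complex.norm_ofNat]
      have := mul_le_mul h1t hρn (norm_nonneg _) (by linarith : (0:ℝ) ≤ 1 + r)
      nlinarith [norm_nonneg ρ, norm_nonneg ((1:ℂ)+t)]
    calc ‖2*t*δ + 2*(1+t)*ρ‖ ≤ ‖2*t*δ‖ + ‖2*(1+t)*ρ‖ := norm_add_le _ _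
      _ ≤ 2 * (r * (2*r)) + 2 * ((1+r) * (4*r^2)) := by linarith
      _ ≤ 32 * r^2 := by nlinarith
  · have b3 : ‖t*t‖ ≤ r * r := by
      rw [norm_mul]; exact mul_le_mul ht ht (norm_nonneg _) hr0
    have b4 : ‖t*σ‖ ≤ r * (7*r^2) := by
      rw [norm_mul]; exact mul_le_mul ht hσn (norm_nonneg _) hr0
    have b5 : ‖t*ρ₂‖ ≤ r * (8*r^2) := by
      rw [norm_mul]; exact mul_le_mul ht hρ₂n (norm_nonneg _) hr0
    calc ‖t*t + σ + ρ₂ + t*σ + t*ρ₂‖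
        ≤ ‖t*t‖ + ‖σ‖ + ‖ρ₂‖ + ‖t*σ‖ + ‖t*ρ₂‖ := by
          calc ‖t*t + σ + ρ₂ + t*σ + t*ρ₂‖ ≤ ‖t*t + σ + ρ₂ + t*σ‖ + ‖t*ρ₂‖ := norm_add_le _ _
            _ ≤ ‖t*t + σ + ρ₂‖ + ‖t*σ‖ + ‖t*ρ₂‖ := by
                have := norm_add_le (t*t + σ + ρ₂) (t*σ); linarith
            _ ≤ ‖t*t + σ‖ + ‖ρ₂‖ + ‖t*σ‖ + ‖t*ρ₂‖ := by
                have := norm_add_le (t*t + σ) ρ₂; linarith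
            _ ≤ ‖t*t‖ + ‖σ‖ + ‖ρ₂‖ + ‖t*σ‖ + ‖t*ρ₂‖ := by
                have := norm_add_le (t*t) σ; linarith
      _ ≤ r*r + 7*r^2 + 8*r^2 + r*(7*r^2) + r*(8*r^2) := by linarith
      _ ≤ 32 * r^2 := by nlinarith



/-- Cauchy-type estimate: an entire map `ℂ² → ℂ²` bounded by `B` on the closed
ball of radius `r` about `x` has `‖fderiv‖ ≤ B / r` at `x`. -/
theorem fderiv_norm_le_of_bound {h : ℂ × ℂ → ℂ × ℂ} (hd : Differentiable ℂ h)
    (x : ℂ × ℂ) {r B : ℝ} (hr : 0 < r) (hB : 0 ≤ B)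
    (hb : ∀ y, ‖y - x‖ ≤ r → ‖h y‖ ≤ B) : ‖fderiv ℂ h x‖ ≤ B / r := by
  apply ContinuousLinearMap.opNorm_le_bound _ (by positivity)
  intro v
  rcases eq_or_ne v 0 with rfl | hv
  · simp
  · have hvn : 0 < ‖v‖ := norm_pos_iff.2 hv
    set φ : ℂ → ℂ × ℂ := fun z => h (x + z • v) with hφdef
    have hline : Differentiable ℂ fun z : ℂ => x + z • v := by fun_prop
    have hφ : Differentiable ℂ φ := hd.comp hline
    have hder : HasDerivAt φ (fderiv ℂ h x v) 0 := by
      have h1 : HasFDerivAt h (fderiv ℂ h x) ((0:ℂ) • v + x) := by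
        simpa using (hd (x + (0:ℂ) • v)).hasFDerivAt
      have h2 : HasDerivAt (fun z : ℂ => x + z • v) v 0 := by
        simpa using ((hasDerivAt_id (0:ℂ)).smul_const v).const_add x
      have := h1.comp_hasDerivAt_of_eq 0 h2 (by simp)
      exact this
    have key : ‖deriv φ 0‖ ≤ B / (r / ‖v‖) := by
      apply norm_deriv_le_of_forall_mem_sphere_norm_le (by positivity)
        (hφ.diffContOnCl)
      intro z hz
      have hzn : ‖z‖ = r / ‖v‖ := by simpa using hz
      apply hb
      have : ‖x + z • v - x‖ = ‖z‖ * ‖v‖ := by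
        rw [add_sub_cancel_left, norm_smul]
      rw [this, hzn]
      field_simp
      exact le_rfl
    rw [hder.deriv] at key
    calc ‖fderiv ℂ h x v‖ ≤ B / (r / ‖v‖) := key
      _ = B / r * ‖v‖ := by field_simp


def hh (q : ℂ × ℂ) : ℂ × ℂ := psi q - (2:ℂ) • q + pp

theorem hh_diff : Differentiable ℂ hh := by
  unfold hh
  exact (psi_diff.sub (differentiable_id.const_smul (2:ℂ))).add_const _

theorem hh_eq (η : ℂ × ℂ) : hh (pp + η) = psi (pp + η) - pp - (2:ℂ) • η := by
  unfold hh; rw [smul_add]; module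

theorem hh_bound {η : ℂ × ℂ} (hη : ‖η‖ ≤ 1/4) : ‖hh (pp + η)‖ ≤ 32 * ‖η‖^2 := by
  rw [hh_eq]; exact psi_taylor hη

theorem fderiv_hh_bound {b : ℝ} (hb0 : 0 < b) (hb : b ≤ 1/8) {q : ℂ × ℂ}
    (hq : ‖q - pp‖ ≤ b) : ‖fderiv ℂ hh q‖ ≤ 128 * b := by
  have key : ∀ y, ‖y - q‖ ≤ b → ‖hh y‖ ≤ 128 * b^2 := by
    intro y hy
    have htri := norm_add_le (y - q) (q - pp)
    rw [show (y - q) + (q - pp) = y - pp by abel] at htri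
    have h4 : ‖y - pp‖ ≤ 1/4 := by linarith
    have hb2 := hh_bound (η := y - pp) h4
    rw [show pp + (y - pp) = y by abel] at hb2
    calc ‖hh y‖ ≤ 32 * ‖y - pp‖^2 := hb2
      _ ≤ 32 * (2*b)^2 := by nlinarith [norm_nonneg (y - pp)]
      _ = 128 * b^2 := by ring
  have hmain := fderiv_norm_le_of_bound hh_diff q hb0 (by positivity) key
  calc ‖fderiv ℂ hh q‖ ≤ 128*b^2 / b := hmain
    _ = 128 * b := by field_simp

theorem psi_lip {b : ℝ} (hb0 : 0 < b) (hb : b ≤ 1/8) {η η' : ℂ × ℂ}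
    (h1 : ‖η‖ ≤ b) (h2 : ‖η'‖ ≤ b) :
    ‖psi (pp + η) - psi (pp + η') - (2:ℂ) • (η - η')‖ ≤ 128 * b * ‖η - η'‖ := by
  have hconv : Convex ℝ (closedBall pp b) := convex_closedBall _ _
  have hder : ∀ x ∈ closedBall pp b,
      HasFDerivWithinAt hh (fderiv ℂ hh x) (closedBall pp b) x :=
    fun x _ => (hh_diff x).hasFDerivAt.hasFDerivWithinAt
  have hbound : ∀ x ∈ closedBall pp b, ‖fderiv ℂ hh x‖ ≤ 128 * b := by
    intro x hx
    rw [mem_closedBall, dist_eq_norm] at hx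
    exact fderiv_hh_bound hb0 hb hx
  have hmem1 : pp + η ∈ closedBall pp b := by
    rw [mem_closedBall, dist_eq_norm]; simpa using h1
  have hmem2 : pp + η' ∈ closedBall pp b := by
    rw [mem_closedBall, dist_eq_norm]; simpa using h2
  have hmvt := hconv.norm_image_sub_le_of_norm_hasFDerivWithin_le hder hbound hmem2 hmem1
  rw [hh_eq, hh_eq] at hmvt
  rw [show psi (pp + η) - pp - (2:ℂ) • η - (psi (pp + η') - pp - (2:ℂ) • η')
      = psi (pp + η) - psi (pp + η') - (2:ℂ) • (η - η') by module] at hmvt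
  rw [show pp + η - (pp + η') = η - η' by abel] at hmvt
  exact hmvt


theorem norm_two_smul (ζ : ℂ × ℂ) : ‖(2:ℂ) • ζ‖ = 2 * ‖ζ‖ := by
  rw [norm_smul, Complex.norm_ofNat]

theorem orbit_bound (m : ℕ) (η : ℂ × ℂ) (hη : ‖η‖ ≤ 1/256 / 2^m) :
    ∀ k, k ≤ m → ‖psi^[k] (pp + η) - pp‖ ≤ 2^k * ‖η‖ * (1 + 2^k / 2^m) := by
  have hpm : (0:ℝ) < 2^m := by positivity
  have hA0 : (0:ℝ) ≤ ‖η‖ := norm_nonneg _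
  intro k
  induction k with
  | zero =>
    intro _
    simp only [Function.iterate_zero, id_eq, pow_zero]
    rw [show pp + η - pp = η by abel]
    have h1 : (0:ℝ) ≤ 1 / 2^m := by positivity
    nlinarith
  | succ k ih =>
    intro hk1
    have hk : k ≤ m := Nat.le_of_succ_le hk1
    have IH := ih hk
    have hpk : (0:ℝ) < 2^k := by positivity
    have hkm : (2:ℝ)^k ≤ 2^m := by
      apply pow_le_pow_right₀ (by norm_num) hk
    have hfrac : (2:ℝ)^k / 2^m ≤ 1 := by rw [div_le_one hpm]; exact hkm
    have hfrac0 : (0:ℝ) ≤ (2:ℝ)^k / 2^m := by positivity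
    set ζ : ℂ × ℂ := psi^[k] (pp + η) - pp with hζ
    have hζb : ‖ζ‖ ≤ 2^k * ‖η‖ * (1 + 2^k/2^m) := IH
    have hX2 : ‖ζ‖ ≤ 2 * (2^k * ‖η‖) := by
      nlinarith [mul_nonneg (mul_nonneg hpk.le hA0) (sub_nonneg.2 hfrac)]
    have hζsmall : ‖ζ‖ ≤ 1/4 := by
      have h1 : (2:ℝ)^k * ‖η‖ ≤ 2^k * (1/256 / 2^m) := by
        apply mul_le_mul_of_nonneg_left hη (le_of_lt hpk)
      have h2 : (2:ℝ)^k * (1/256/2^m) = (2^k/2^m) * (1/256) := by ring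
      nlinarith
    have step : psi^[k+1] (pp + η) = psi (pp + ζ) := by
      rw [Function.iterate_succ_apply']
      congr 1
      rw [hζ]; abel
    have htay := psi_taylor (η := ζ) hζsmall
    have hnorm : ‖psi (pp + ζ) - pp‖ ≤ 2 * ‖ζ‖ + 32 * ‖ζ‖^2 := by
      calc ‖psi (pp + ζ) - pp‖
          = ‖(psi (pp + ζ) - pp - (2:ℂ) • ζ) + (2:ℂ) • ζ‖ := by congr 1; abel
        _ ≤ ‖psi (pp + ζ) - pp - (2:ℂ) • ζ‖ + ‖(2:ℂ) • ζ‖ := norm_add_le _ _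
        _ ≤ 32 * ‖ζ‖^2 + 2 * ‖ζ‖ := by rw [norm_two_smul]; linarith
        _ = 2 * ‖ζ‖ + 32 * ‖ζ‖^2 := by ring
    rw [step]
    have hX0 : (0:ℝ) ≤ ‖ζ‖ := norm_nonneg _
    -- final arithmetic
    have hq1 : 32 * ‖ζ‖^2 ≤ 64 * (2^k * ‖η‖) * ‖ζ‖ := by nlinarith
    have hq2 : 64 * (2^k * ‖η‖) * ‖ζ‖ ≤ 128 * (2^k * ‖η‖) * (2^k * ‖η‖) := by
      nlinarith
    have hq3 : 128 * ((2:ℝ)^k * ‖η‖) * (2^k * ‖η‖) ≤ 2 * (2^k * ‖η‖) * (2^k/2^m) := by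
      have h64 : 64 * ‖η‖ ≤ 1/2^m := by
        rw [div_eq_mul_inv] at hη ⊢
        nlinarith [inv_pos.2 hpm]
      have hkey := mul_le_mul_of_nonneg_left h64
        (mul_nonneg (mul_nonneg hpk.le hpk.le) hA0)
      have hdiv : (2:ℝ)^k / 2^m = 2^k * (1/2^m) := by ring
      nlinarith [hkey]
    have hgoal : 2 * ‖ζ‖ + 32 * ‖ζ‖^2
        ≤ 2 * (2^k * ‖η‖ * (1 + 2^k/2^m)) + 2 * (2^k * ‖η‖) * (2^k/2^m) := by
      linarith
    calc ‖psi (pp + ζ) - pp‖ ≤ 2 * ‖ζ‖ + 32 * ‖ζ‖^2 := hnorm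
      _ ≤ 2 * (2^k * ‖η‖ * (1 + 2^k/2^m)) + 2 * (2^k * ‖η‖) * (2^k/2^m) := hgoal
      _ ≤ 2^(k+1) * ‖η‖ * (1 + 2^(k+1)/2^m) := le_of_eq (by rw [pow_succ]; ring)
  

theorem orbit_diff (m : ℕ) (η η' : ℂ × ℂ) (hη : ‖η‖ ≤ 1/256 / 2^m)
    (hη' : ‖η'‖ ≤ 1/256 / 2^m) :
    ∀ k, k ≤ m → ‖psi^[k] (pp + η) - psi^[k] (pp + η')‖
      ≤ 2^k * (1 + 2^k / 2^m) * ‖η - η'‖ := by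
  have hpm : (0:ℝ) < 2^m := by positivity
  have hD0 : (0:ℝ) ≤ ‖η - η'‖ := norm_nonneg _
  intro k
  induction k with
  | zero =>
    intro _
    simp only [Function.iterate_zero, id_eq, pow_zero]
    rw [show pp + η - (pp + η') = η - η' by abel]
    have h1 : (0:ℝ) ≤ 1/2^m := by positivity
    nlinarith
  | succ k ih =>
    intro hk1
    have hk : k ≤ m := Nat.le_of_succ_le hk1
    have IH := ih hk
    have hpk : (0:ℝ) < 2^k := by positivity
    have hkm : (2:ℝ)^k ≤ 2^m := pow_le_pow_right₀ (by norm_num) hk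
    have hfrac : (2:ℝ)^k / 2^m ≤ 1 := by rw [div_le_one hpm]; exact hkm
    have hfrac0 : (0:ℝ) ≤ (2:ℝ)^k / 2^m := by positivity
    set b : ℝ := (1/128) * (2^k / 2^m) with hbdef
    have hb0 : 0 < b := by positivity
    have hb8 : b ≤ 1/8 := by nlinarith
    set ζ : ℂ × ℂ := psi^[k] (pp + η) - pp with hζ
    set ζ' : ℂ × ℂ := psi^[k] (pp + η') - pp with hζ'
    have hζb : ‖ζ‖ ≤ b := by
      have h1 := orbit_bound m η hη k hk
      have h2 : (2:ℝ)^k * ‖η‖ ≤ (2^k/2^m) * (1/256) := by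
        have h3 := mul_le_mul_of_nonneg_left hη (le_of_lt hpk)
        exact h3.trans (le_of_eq (by ring))
      nlinarith [norm_nonneg η, mul_nonneg (mul_nonneg hpk.le (norm_nonneg η))
        (sub_nonneg.2 hfrac)]
    have hζ'b : ‖ζ'‖ ≤ b := by
      have h1 := orbit_bound m η' hη' k hk
      have h2 : (2:ℝ)^k * ‖η'‖ ≤ (2^k/2^m) * (1/256) := by
        have h3 := mul_le_mul_of_nonneg_left hη' (le_of_lt hpk)
        exact h3.trans (le_of_eq (by ring))
      nlinarith [norm_nonneg η', mul_nonneg (mul_nonneg hpk.le (norm_nonneg η'))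
        (sub_nonneg.2 hfrac)]
    have step1 : psi^[k+1] (pp + η) = psi (pp + ζ) := by
      rw [Function.iterate_succ_apply']; congr 1; rw [hζ]; abel
    have step2 : psi^[k+1] (pp + η') = psi (pp + ζ') := by
      rw [Function.iterate_succ_apply']; congr 1; rw [hζ']; abel
    have hlip := psi_lip hb0 hb8 hζb hζ'b
    have h128b : 128 * b = 2^k / 2^m := by rw [hbdef]; ring
    rw [h128b] at hlip
    have htri : ‖psi (pp + ζ) - psi (pp + ζ')‖
        ≤ 2 * ‖ζ - ζ'‖ + (2^k/2^m) * ‖ζ - ζ'‖ := by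
      calc ‖psi (pp + ζ) - psi (pp + ζ')‖
          = ‖(psi (pp + ζ) - psi (pp + ζ') - (2:ℂ) • (ζ - ζ')) + (2:ℂ) • (ζ - ζ')‖ := by
            congr 1; abel
        _ ≤ ‖psi (pp + ζ) - psi (pp + ζ') - (2:ℂ) • (ζ - ζ')‖ + ‖(2:ℂ) • (ζ - ζ')‖ :=
            norm_add_le _ _
        _ ≤ (2^k/2^m) * ‖ζ - ζ'‖ + 2 * ‖ζ - ζ'‖ := by rw [norm_two_smul]; linarith
        _ = 2 * ‖ζ - ζ'‖ + (2^k/2^m) * ‖ζ - ζ'‖ := by ring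
    have hζζ' : ζ - ζ' = psi^[k] (pp + η) - psi^[k] (pp + η') := by
      rw [hζ, hζ']; abel
    rw [step1, step2]
    rw [hζζ'] at htri
    have hDk : ‖psi^[k] (pp + η) - psi^[k] (pp + η')‖ ≤ 2^k * (1 + 2^k/2^m) * ‖η - η'‖ := IH
    have hDk0 : (0:ℝ) ≤ ‖psi^[k] (pp + η) - psi^[k] (pp + η')‖ := norm_nonneg _
    calc ‖psi (pp + ζ) - psi (pp + ζ')‖
        ≤ (2 + 2^k/2^m) * ‖psi^[k] (pp + η) - psi^[k] (pp + η')‖ := by linarith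
      _ ≤ (2 + 2^k/2^m) * (2^k * (1 + 2^k/2^m) * ‖η - η'‖) := by
          apply mul_le_mul_of_nonneg_left hDk (by linarith)
      _ ≤ 2^(k+1) * (1 + 2^(k+1)/2^m) * ‖η - η'‖ := by
          rw [pow_succ]
          have key : 2^k*2*(1 + 2^k*2/2^m)*‖η - η'‖
              - (2 + 2^k/2^m) * (2^k * (1 + 2^k/2^m) * ‖η - η'‖)
              = (2^k * ‖η - η'‖) * ((2^k/2^m) * (1 - 2^k/2^m)) := by ring
          have hn : (0:ℝ) ≤ (2^k * ‖η - η'‖) * ((2^k/2^m) * (1 - 2^k/2^m)) :=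
            mul_nonneg (mul_nonneg hpk.le hD0)
              (mul_nonneg hfrac0 (sub_nonneg.2 hfrac))
          linarith


def cc (n : ℕ) : ℂ := (1/2 : ℂ)^n

def g (n : ℕ) (x : ℂ × ℂ) : ℂ × ℂ := psi^[n] (pp + cc n • x)

theorem norm_half : ‖(1/2 : ℂ)‖ = 1/2 := by
  rw [norm_div, norm_one, Complex.norm_ofNat]

theorem norm_cc_smul (n : ℕ) (x : ℂ × ℂ) : ‖cc n • x‖ = (1/2)^n * ‖x‖ := by
  rw [norm_smul]
  congr 1
  rw [cc, norm_pow, norm_half]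

theorem cc_succ_smul (n : ℕ) (x : ℂ × ℂ) : (2:ℂ) • (cc (n+1) • x) = cc n • x := by
  rw [smul_smul]
  congr 1
  rw [cc, cc, pow_succ]
  ring

theorem half_pow_eq (n : ℕ) : ((1:ℝ)/2)^n = 1/2^n := by
  rw [div_pow, one_pow]

theorem two_pow_half_pow (n : ℕ) : (2:ℝ)^n * (1/2)^n = 1 := by
  rw [← mul_pow]; norm_num

theorem tel {x : ℂ × ℂ} (hx : ‖x‖ ≤ 1/512) (n : ℕ) :
    ‖g (n+1) x - g n x‖ ≤ 16 * ‖x‖^2 * (1/2)^n := by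
  have hx0 : (0:ℝ) ≤ ‖x‖ := norm_nonneg _
  have hhp : (0:ℝ) < (1/2)^n := by positivity
  have hhp1 : ((1:ℝ)/2)^n ≤ 1 := pow_le_one₀ (by norm_num) (by norm_num)
  have hη'n : ‖cc (n+1) • x‖ = (1/2)^(n+1) * ‖x‖ := norm_cc_smul _ _
  have hsmall : ‖cc (n+1) • x‖ ≤ 1/4 := by
    rw [hη'n]
    have : ((1:ℝ)/2)^(n+1) ≤ 1 := pow_le_one₀ (by norm_num) (by norm_num)
    nlinarith
  have htay := psi_taylor hsmall
  set e : ℂ × ℂ := psi (pp + cc (n+1) • x) - pp - (2:ℂ) • (cc (n+1) • x) with hedef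
  have hen : ‖e‖ ≤ 8 * ((1/2)^n)^2 * ‖x‖^2 := by
    calc ‖e‖ ≤ 32 * ‖cc (n+1) • x‖^2 := htay
      _ = 32 * ((1/2)^(n+1) * ‖x‖)^2 := by rw [hη'n]
      _ = 8 * ((1/2)^n)^2 * ‖x‖^2 := by rw [pow_succ]; ring
  have hpsi : psi (pp + cc (n+1) • x) = pp + (cc n • x + e) := by
    rw [hedef, ← cc_succ_smul n x]
    abel
  have hg1 : g (n+1) x = psi^[n] (pp + (cc n • x + e)) := by
    show psi^[n+1] (pp + cc (n+1) • x) = _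
    rw [Function.iterate_succ_apply, hpsi]
  have hccn : ‖cc n • x‖ = (1/2)^n * ‖x‖ := norm_cc_smul _ _
  have hkey : (1:ℝ)/256/2^n = (1/256)*(1/2)^n := by rw [half_pow_eq]; ring
  have hb2 : ‖cc n • x‖ ≤ 1/256/2^n := by
    rw [hccn, hkey]
    nlinarith
  have hb1 : ‖cc n • x + e‖ ≤ 1/256/2^n := by
    have htr : ‖cc n • x + e‖ ≤ ‖cc n • x‖ + ‖e‖ := norm_add_le _ _
    rw [hccn] at htr
    rw [hkey]
    nlinarith [mul_le_mul_of_nonneg_left hx (mul_nonneg hhp.le hx0),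
      mul_le_mul_of_nonneg_left hx hhp.le,
      mul_nonneg (mul_nonneg hhp.le (sub_nonneg.2 hhp1)) (sq_nonneg ‖x‖)]
  have hdiff := orbit_diff n (cc n • x + e) (cc n • x) hb1 hb2 n le_rfl
  rw [show (cc n • x + e) - cc n • x = e by abel] at hdiff
  have hfr : (2:ℝ)^n / 2^n = 1 := by
    apply div_self; positivity
  rw [hfr] at hdiff
  have hg2 : g n x = psi^[n] (pp + cc n • x) := rfl
  rw [hg1, hg2]
  rw [show (1:ℝ) + 1 = 2 by norm_num] at hdiff
  calc ‖psi^[n] (pp + (cc n • x + e)) - psi^[n] (pp + cc n • x)‖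
      ≤ 2^n * 2 * ‖e‖ := hdiff
    _ ≤ 2^n * 2 * (8 * ((1/2)^n)^2 * ‖x‖^2) := by
        apply mul_le_mul_of_nonneg_left hen (by positivity)
    _ = 16 * ‖x‖^2 * ((2^n * (1/2)^n) * (1/2)^n) := by ring
    _ = 16 * ‖x‖^2 * (1/2)^n := by rw [two_pow_half_pow, one_mul]


theorem quad_partial {x : ℂ × ℂ} (hx : ‖x‖ ≤ 1/512) :
    ∀ n, ‖g n x - (pp + x)‖ ≤ 32 * (1 - (1/2)^n) * ‖x‖^2 := by
  intro n
  induction n with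
  | zero =>
    have h0 : g 0 x = pp + x := by
      show psi^[0] (pp + cc 0 • x) = pp + x
      simp [cc]
    rw [h0]
    simp
  | succ n ih =>
    have htel := tel hx n
    have htri := norm_add_le (g (n+1) x - g n x) (g n x - (pp + x))
    rw [show (g (n+1) x - g n x) + (g n x - (pp + x)) = g (n+1) x - (pp + x) by abel] at htri
    have heq : 16 * ‖x‖^2 * (1/2)^n + 32 * (1 - (1/2)^n) * ‖x‖^2
        = 32 * (1 - (1/2)^(n+1)) * ‖x‖^2 := by rw [pow_succ]; ring
    linarith

theorem cauchy_g {x : ℂ × ℂ} (hx : ‖x‖ ≤ 1/512) : CauchySeq (fun n => g n x) := by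
  apply cauchySeq_of_le_geometric (1/2 : ℝ) (16 * ‖x‖^2) (by norm_num)
  intro n
  rw [dist_eq_norm, norm_sub_rev]
  exact tel hx n

theorem g_shift (N n : ℕ) (x : ℂ × ℂ) : g (n + N) x = psi^[N] (g n (cc N • x)) := by
  show psi^[n + N] (pp + cc (n+N) • x) = psi^[N] (psi^[n] (pp + cc n • (cc N • x)))
  rw [smul_smul, show cc n * cc N = cc (n+N) by simp only [cc]; rw [pow_add]]
  rw [add_comm n N, Function.iterate_add_apply]

theorem exists_tendsto (x : ℂ × ℂ) : ∃ L, Tendsto (fun n => g n x) atTop (𝓝 L) := by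
  obtain ⟨N, hN⟩ : ∃ N : ℕ, ‖cc N • x‖ ≤ 1/512 := by
    obtain ⟨N, hN⟩ := exists_pow_lt_of_lt_one
      (show (0:ℝ) < 1/512/(‖x‖+1) by positivity) (show (1:ℝ)/2 < 1 by norm_num)
    refine ⟨N, ?_⟩
    rw [norm_cc_smul]
    have hx1 : (0:ℝ) < ‖x‖ + 1 := by positivity
    have h2 := mul_lt_mul_of_pos_right hN hx1
    rw [div_mul_cancel₀ _ (ne_of_gt hx1)] at h2
    nlinarith [pow_pos (show (0:ℝ) < 1/2 by norm_num) N, norm_nonneg x]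
  obtain ⟨ℓ, hℓ⟩ := cauchySeq_tendsto_of_complete (cauchy_g hN)
  refine ⟨psi^[N] ℓ, ?_⟩
  have hcont : Continuous (psi^[N]) := psi_diff.continuous.iterate N
  have h2 : Tendsto (fun n => g (n + N) x) atTop (𝓝 (psi^[N] ℓ)) := by
    simp_rw [g_shift]
    exact (hcont.tendsto ℓ).comp hℓ
  exact (tendsto_add_atTop_iff_nat N).1 h2

def FF (x : ℂ × ℂ) : ℂ × ℂ := (exists_tendsto x).choose

theorem FF_tendsto (x : ℂ × ℂ) : Tendsto (fun n => g n x) atTop (𝓝 (FF x)) :=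
  (exists_tendsto x).choose_spec

theorem g_succ_half (n : ℕ) (x : ℂ × ℂ) : g (n+1) x = psi (g n ((1/2 : ℂ) • x)) := by
  show psi^[n+1] (pp + cc (n+1) • x) = psi (psi^[n] (pp + cc n • ((1/2:ℂ) • x)))
  rw [smul_smul, show cc n * (1/2 : ℂ) = cc (n+1) by rw [cc, cc, pow_succ]]
  rw [Function.iterate_succ_apply']

theorem FF_half (x : ℂ × ℂ) : FF x = psi (FF ((1/2:ℂ) • x)) := by
  have h1 : Tendsto (fun n => g (n+1) x) atTop (𝓝 (FF x)) :=
    (tendsto_add_atTop_iff_nat 1).2 (FF_tendsto x)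
  have h2 : Tendsto (fun n => psi (g n ((1/2:ℂ) • x))) atTop
      (𝓝 (psi (FF ((1/2:ℂ) • x)))) :=
    (psi_diff.continuous.tendsto _).comp (FF_tendsto _)
  simp_rw [g_succ_half] at h1
  exact tendsto_nhds_unique h1 h2

theorem FF_zero : FF 0 = pp := by
  have hg0 : ∀ n, g n 0 = pp := fun n => by
    show psi^[n] (pp + cc n • 0) = pp
    rw [smul_zero, add_zero]
    exact Function.iterate_fixed psi_fix n
  have h := FF_tendsto 0
  simp_rw [hg0] at h
  exact tendsto_nhds_unique h tendsto_const_nhds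

theorem FF_quad {x : ℂ × ℂ} (hx : ‖x‖ ≤ 1/512) : ‖FF x - (pp + x)‖ ≤ 32 * ‖x‖^2 := by
  have h1 : Tendsto (fun n => ‖g n x - (pp + x)‖) atTop (𝓝 ‖FF x - (pp + x)‖) :=
    ((FF_tendsto x).sub_const _).norm
  apply le_of_tendsto h1
  filter_upwards with n
  have := quad_partial hx n
  nlinarith [pow_nonneg (show (0:ℝ) ≤ 1/2 by norm_num) n, sq_nonneg ‖x‖]


theorem g_diff (n : ℕ) : Differentiable ℂ (g n) := by
  apply (psi_diff.iterate n).comp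
  exact (differentiable_id.const_smul (cc n)).const_add pp

theorem fderiv_g_step {x : ℂ × ℂ} (hx : ‖x‖ ≤ 1/1024) (n : ℕ) :
    ‖fderiv ℂ (g (n+1)) x - fderiv ℂ (g n) x‖ ≤ (1/16) * (1/2)^n := by
  have hdiffn : Differentiable ℂ (fun y => g (n+1) y - g n y) :=
    (g_diff _).sub (g_diff _)
  have hp2 : (0:ℝ) < (1/2)^n := by positivity
  have hb : ∀ y, ‖y - x‖ ≤ 1/1024 → ‖g (n+1) y - g n y‖ ≤ 16*(1/512)^2*(1/2)^n := by
    intro y hy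
    have hyn : ‖y‖ ≤ 1/512 := by
      have h1 := norm_add_le (y - x) x
      rw [sub_add_cancel] at h1
      linarith
    have h2 := tel hyn n
    have h5 : ‖y‖^2 ≤ ((1:ℝ)/512)^2 := by nlinarith [norm_nonneg y]
    nlinarith [mul_le_mul_of_nonneg_right h5 hp2.le]
  have hT := fderiv_norm_le_of_bound hdiffn x (by norm_num) (by positivity) hb
  have heq : fderiv ℂ (fun y => g (n+1) y - g n y) x
      = fderiv ℂ (g (n+1)) x - fderiv ℂ (g n) x :=
    fderiv_sub ((g_diff (n+1)) x) ((g_diff n) x)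
  rw [heq] at hT
  calc ‖fderiv ℂ (g (n+1)) x - fderiv ℂ (g n) x‖
      ≤ 16*(1/512)^2*(1/2)^n / (1/1024) := hT
    _ = (1/16) * (1/2)^n := by ring

theorem fderiv_g_dist {x : ℂ × ℂ} (hx : ‖x‖ ≤ 1/1024) (n : ℕ) :
    ∀ j, dist (fderiv ℂ (g (n+j)) x) (fderiv ℂ (g n) x)
      ≤ (1/8) * (1/2)^n * (1 - (1/2)^j) := by
  intro j
  induction j with
  | zero => simp
  | succ j ih =>
    have hstep := fderiv_g_step hx (n+j)
    have htri := dist_triangle (fderiv ℂ (g (n+(j+1))) x) (fderiv ℂ (g (n+j)) x)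
      (fderiv ℂ (g n) x)
    have hd1 : dist (fderiv ℂ (g (n+(j+1))) x) (fderiv ℂ (g (n+j)) x)
        ≤ (1/16) * (1/2)^(n+j) := by
      rw [dist_eq_norm, show n+(j+1) = (n+j)+1 by ring]
      exact hstep
    have heq : (1/16) * ((1:ℝ)/2)^(n+j) + (1/8) * (1/2)^n * (1 - (1/2)^j)
        = (1/8) * (1/2)^n * (1 - (1/2)^(j+1)) := by
      rw [pow_add, pow_succ]; ring
    linarith
  
theorem exists_fderiv_lim {x : ℂ × ℂ} (hx : ‖x‖ ≤ 1/1024) :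
    ∃ L, Tendsto (fun n => fderiv ℂ (g n) x) atTop (𝓝 L) := by
  apply cauchySeq_tendsto_of_complete
  apply cauchySeq_of_le_geometric (1/2 : ℝ) (1/16) (by norm_num)
  intro n
  rw [dist_eq_norm, norm_sub_rev]
  exact fderiv_g_step hx n

def GG (x : ℂ × ℂ) : (ℂ × ℂ) →L[ℂ] (ℂ × ℂ) :=
  limUnder atTop (fun n => fderiv ℂ (g n) x)

theorem GG_tendsto {x : ℂ × ℂ} (hx : ‖x‖ ≤ 1/1024) :
    Tendsto (fun n => fderiv ℂ (g n) x) atTop (𝓝 (GG x)) := by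
  obtain ⟨L, hL⟩ := exists_fderiv_lim hx
  rw [GG, hL.limUnder_eq]
  exact hL

theorem unif_cauchy : UniformCauchySeqOn (fun n x => fderiv ℂ (g n) x) atTop
    (closedBall (0 : ℂ × ℂ) (1/1024)) := by
  rw [Metric.uniformCauchySeqOn_iff]
  intro ε hε
  obtain ⟨N, hN⟩ := exists_pow_lt_of_lt_one (show (0:ℝ) < 4*ε by linarith)
    (show (1:ℝ)/2 < 1 by norm_num)
  refine ⟨N, fun m hm n hn x hxmem => ?_⟩
  have hx : ‖x‖ ≤ 1/1024 := by
    rw [mem_closedBall, dist_zero_right] at hxmem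
    exact hxmem
  have hkey : ∀ a b : ℕ, N ≤ a → a ≤ b →
      dist (fderiv ℂ (g b) x) (fderiv ℂ (g a) x) < ε := by
    intro a b ha hab
    obtain ⟨j, rfl⟩ := Nat.exists_eq_add_of_le hab
    have h1 := fderiv_g_dist hx a j
    have h2 : ((1:ℝ)/2)^a ≤ (1/2)^N :=
      pow_le_pow_of_le_one (by norm_num) (by norm_num) ha
    have h3 : (0:ℝ) < (1/2)^j := by positivity
    have h4 : (0:ℝ) < (1/2)^a := by positivity
    calc dist (fderiv ℂ (g (a+j)) x) (fderiv ℂ (g a) x)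
        ≤ (1/8) * (1/2)^a * (1 - (1/2)^j) := h1
      _ ≤ (1/8) * (1/2)^N := by nlinarith
      _ < ε := by nlinarith
  rcases le_total m n with h | h
  · rw [dist_comm]; exact hkey m n hm h
  · exact hkey n m hn h

theorem FF_hasderiv {x : ℂ × ℂ} (hx : x ∈ ball (0 : ℂ × ℂ) (1/1024)) :
    HasFDerivAt FF (GG x) x := by
  have h1 : TendstoUniformlyOn (fun n x => fderiv ℂ (g n) x) GG atTop
      (ball (0 : ℂ × ℂ) (1/1024)) := by
    apply (unif_cauchy.mono ball_subset_closedBall).tendstoUniformlyOn_of_tendsto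
    intro y hy
    rw [mem_ball, dist_zero_right] at hy
    exact GG_tendsto hy.le
  have h2 : ∀ n : ℕ, ∀ y ∈ ball (0 : ℂ × ℂ) (1/1024),
      HasFDerivAt (g n) (fderiv ℂ (g n) y) y := fun n y _ => ((g_diff n) y).hasFDerivAt
  have h3 : ∀ y ∈ ball (0 : ℂ × ℂ) (1/1024),
      Tendsto (fun n => g n y) atTop (𝓝 (FF y)) := fun y _ => FF_tendsto y
  exact hasFDerivAt_of_tendstoUniformlyOn isOpen_ball h1 h2 h3 hx



theorem cc_half_smul (N : ℕ) (x : ℂ × ℂ) : (1/2:ℂ) • (cc N • x) = cc (N+1) • x := by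
  rw [smul_smul]
  congr 1
  rw [cc, cc, pow_succ]
  ring

theorem small_smul (x : ℂ × ℂ) (c : ℝ) (hc : 0 < c) : ∃ N : ℕ, ‖cc N • x‖ < c := by
  obtain ⟨N, hN⟩ := exists_pow_lt_of_lt_one
    (show (0:ℝ) < c/(‖x‖+1) by positivity) (show (1:ℝ)/2 < 1 by norm_num)
  refine ⟨N, ?_⟩
  rw [norm_cc_smul]
  have hx1 : (0:ℝ) < ‖x‖ + 1 := by positivity
  have h2 := mul_lt_mul_of_pos_right hN hx1
  rw [div_mul_cancel₀ _ (ne_of_gt hx1)] at h2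
  nlinarith [pow_pos (show (0:ℝ) < 1/2 by norm_num) N, norm_nonneg x]

theorem FF_iterN : ∀ N (x : ℂ × ℂ), FF x = psi^[N] (FF (cc N • x)) := by
  intro N
  induction N with
  | zero => intro x; simp [cc]
  | succ N ih =>
    intro x
    rw [ih x, FF_half (cc N • x), cc_half_smul, ← Function.iterate_succ_apply]

theorem FF_differentiable : Differentiable ℂ FF := by
  intro x₀
  obtain ⟨N, hN⟩ := small_smul x₀ (1/1024) (by norm_num)
  have heq : FF = fun x => psi^[N] (FF (cc N • x)) := funext (FF_iterN N)
  rw [heq]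
  have hmem : cc N • x₀ ∈ ball (0 : ℂ × ℂ) (1/1024) := by
    rw [mem_ball, dist_zero_right]; exact hN
  have hFFat : DifferentiableAt ℂ FF (cc N • x₀) := (FF_hasderiv hmem).differentiableAt
  have houter : DifferentiableAt ℂ (psi^[N]) (FF (cc N • x₀)) := (psi_diff.iterate N) _
  have hinner : DifferentiableAt ℂ (fun x : ℂ × ℂ => cc N • x) x₀ :=
    (differentiable_id.const_smul (cc N)) x₀
  exact houter.comp x₀ (hFFat.comp x₀ hinner)

theorem FF_inj : Function.Injective FF := by
  intro x y hxy
  by_contra hne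
  have hkey : ∀ n, FF (cc n • x) = FF (cc n • y) := by
    intro n
    induction n with
    | zero => simpa [cc] using hxy
    | succ n ih =>
      have h1 := FF_half (cc n • x)
      have h2 := FF_half (cc n • y)
      rw [cc_half_smul] at h1 h2
      rw [ih] at h1
      exact psi_inj (h1.symm.trans h2)
  have hxy0 : (0:ℝ) < ‖x - y‖ := by
    rw [norm_pos_iff, sub_ne_zero]; exact hne
  set C : ℝ := 32 * (‖x‖^2 + ‖y‖^2) + 1 with hC
  have hC0 : (0:ℝ) < C := by positivity
  set D : ℝ := min (‖x-y‖/C) ((1/512)/(max ‖x‖ ‖y‖ + 1)) with hD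
  have hD0 : (0:ℝ) < D := by
    apply lt_min
    · positivity
    · positivity
  obtain ⟨n, hn⟩ := exists_pow_lt_of_lt_one hD0 (show (1:ℝ)/2 < 1 by norm_num)
  have hp0 : (0:ℝ) < (1/2)^n := by positivity
  have hmax : (0:ℝ) < max ‖x‖ ‖y‖ + 1 := by positivity
  have hnx : ‖cc n • x‖ ≤ 1/512 := by
    rw [norm_cc_smul]
    have h1 : ((1:ℝ)/2)^n < (1/512)/(max ‖x‖ ‖y‖ + 1) := lt_of_lt_of_le hn (min_le_right _ _)
    have h2 := mul_lt_mul_of_pos_right h1 hmax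
    rw [div_mul_cancel₀ _ (ne_of_gt hmax)] at h2
    nlinarith [norm_nonneg x, le_max_left ‖x‖ ‖y‖]
  have hny : ‖cc n • y‖ ≤ 1/512 := by
    rw [norm_cc_smul]
    have h1 : ((1:ℝ)/2)^n < (1/512)/(max ‖x‖ ‖y‖ + 1) := lt_of_lt_of_le hn (min_le_right _ _)
    have h2 := mul_lt_mul_of_pos_right h1 hmax
    rw [div_mul_cancel₀ _ (ne_of_gt hmax)] at h2
    nlinarith [norm_nonneg y, le_max_right ‖x‖ ‖y‖]
  have hq1 := FF_quad hnx
  have hq2 := FF_quad hny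
  have heq2 : cc n • x - cc n • y
      = (FF (cc n • y) - (pp + cc n • y)) - (FF (cc n • x) - (pp + cc n • x)) := by
    rw [hkey n]; abel
  have htri : ‖cc n • x - cc n • y‖
      ≤ ‖FF (cc n • y) - (pp + cc n • y)‖ + ‖FF (cc n • x) - (pp + cc n • x)‖ := by
    rw [heq2]; exact norm_sub_le _ _
  have hnorm_sub : ‖cc n • x - cc n • y‖ = (1/2)^n * ‖x - y‖ := by
    rw [← smul_sub, norm_cc_smul]
  rw [hnorm_sub] at htri
  have hnx2 : ‖cc n • x‖^2 = ((1/2)^n)^2 * ‖x‖^2 := by rw [norm_cc_smul]; ring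
  have hny2 : ‖cc n • y‖^2 = ((1/2)^n)^2 * ‖y‖^2 := by rw [norm_cc_smul]; ring
  rw [hnx2] at hq1
  rw [hny2] at hq2
  -- so (1/2)^n ‖x-y‖ ≤ 32 ((1/2)^n)^2 (‖x‖²+‖y‖²), hence ‖x-y‖ ≤ (1/2)^n (C-1) < ‖x-y‖
  have hCeq : (((1:ℝ)/2)^n)^2*(C-1) = 32*(((1/2)^n)^2*‖x‖^2) + 32*(((1/2)^n)^2*‖y‖^2) := by
    rw [hC]; ring
  have h3' : (1/2:ℝ)^n * ‖x-y‖ ≤ (1/2)^n * ((1/2)^n * (C-1)) := by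
    have : ((1:ℝ)/2)^n * ((1/2)^n * (C-1)) = (((1/2)^n)^2)*(C-1) := by ring
    rw [this, hCeq]
    linarith
  have hfin : ‖x - y‖ ≤ (1/2)^n * (C - 1) := le_of_mul_le_mul_left h3' hp0
  have hlast : ((1:ℝ)/2)^n < ‖x-y‖/C := lt_of_lt_of_le hn (min_le_left _ _)
  have h5 := mul_lt_mul_of_pos_right hlast hC0
  rw [div_mul_cancel₀ _ (ne_of_gt hC0)] at h5
  -- (1/2)^n * C < ‖x-y‖ and ‖x-y‖ ≤ (1/2)^n (C-1)
  nlinarith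

theorem FF_snd_ne (x : ℂ × ℂ) : (FF x).2 ≠ 0 := by
  intro h0
  have hkey : ∀ n, (FF (cc n • x)).2 = 0 := by
    intro n
    induction n with
    | zero => simpa [cc] using h0
    | succ n ih =>
      have h1 := FF_half (cc n • x)
      rw [cc_half_smul] at h1
      have h2 : (psi (FF (cc (n+1) • x))).2 = 0 := by rw [← h1]; exact ih
      exact psi_snd_eq_zero h2
  have hc : Tendsto (fun n : ℕ => cc n • x) atTop (𝓝 (0 : ℂ × ℂ)) := by
    rw [tendsto_zero_iff_norm_tendsto_zero]
    have h1 : Tendsto (fun n : ℕ => ((1:ℝ)/2)^n * ‖x‖) atTop (𝓝 (0 * ‖x‖)) :=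
      (tendsto_pow_atTop_nhds_zero_of_lt_one (by norm_num) (by norm_num)).mul_const ‖x‖
    rw [zero_mul] at h1
    simpa [norm_cc_smul] using h1
  have hFFc : Tendsto (fun n : ℕ => FF (cc n • x)) atTop (𝓝 (FF 0)) :=
    (FF_differentiable.continuous.tendsto 0).comp hc
  have hsnd : Tendsto (fun n : ℕ => (FF (cc n • x)).2) atTop (𝓝 ((FF 0).2)) :=
    (continuous_snd.tendsto _).comp hFFc
  simp_rw [hkey] at hsnd
  have hzero : (FF 0).2 = 0 := tendsto_nhds_unique hsnd tendsto_const_nhds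
  rw [FF_zero] at hzero
  simp [pp] at hzero

end Stmt15

/-- if E is a closed discrete subset of ℂ² contained in the
complex line ℂ × {0}, then there is an injective holomorphic F : ℂ² → ℂ² whose
image is disjoint from E. -/
theorem stmt15 (E : Set (ℂ × ℂ)) (hEc : IsClosed E) (hEd : DiscreteTopology E)
    (hEl : E ⊆ {w : ℂ × ℂ | w.2 = 0}) :
    ∃ F : ℂ × ℂ → ℂ × ℂ,
      Differentiable ℂ F ∧ Function.Injective F ∧
      ∀ x : ℂ × ℂ, F x ∉ E := by
  refine ⟨Stmt15.FF, Stmt15.FF_differentiable, Stmt15.FF_inj, fun x hx => ?_⟩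
  exact Stmt15.FF_snd_ne x (hEl hx)
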